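/- Let r ≥ 2 and let G be an r-regular graph with an edge e = xy contained in exactly c1 Hamiltonian cycles. Let H be a graph with two vertices u, v of degree r-1 and all other vertices of degree r, having exactly c2 Hamiltonian u–v paths. Form G' from the disjoint union of G and H by deleting e and adding edges xu and yv. Then G' is r-regular and has exactly c1·c2 Hamiltonian cycles. -/

import Mathlib

open SimpleGraph Walk

namespace Stmt10Aux


section A
variable {V : Type*} {Γ : SimpleGraph V}

/-- In a path, any edge containing the first vertex is the first edge. -/
lemma first_edge {a b : V} (p : Γ.Walk a b) (hp : p.IsPath) {e : Sym2 V}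
    (he : e ∈ p.edges) (ha : a ∈ e) :
    ∃ (c : V) (h : Γ.Adj a c) (q : Γ.Walk c b), p = Walk.cons h q ∧ e = s(a, c) := by
  cases p with
  | nil => simp at he
  | cons h q =>
    rename_i c
    rw [Walk.edges_cons, List.mem_cons] at he
    rcases he with rfl | he
    · exact ⟨c, h, q, rfl, rfl⟩
    · exfalso
      have hmem : a ∈ q.support := by
        induction e with
        | _ c d =>
          rcases Sym2.mem_iff.1 ha with rfl | rfl
          · exact q.fst_mem_support_of_mem_edges he
          · exact q.snd_mem_support_of_mem_edges he
      exact ((Walk.cons_isPath_iff h q).1 hp).2 hmem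

/-- Two paths with the same endpoints and same edge sets are equal. -/
lemma path_eq_of_edges_eq : ∀ {a b : V} (p q : Γ.Walk a b), p.IsPath → q.IsPath →
      (∀ e, e ∈ p.edges ↔ e ∈ q.edges) → p = q
  | a, _, Walk.nil, q, _, hq, hedges => by
    cases q with
    | nil => rfl
    | cons h q' =>
      exfalso
      rename_i c
      have : s(a, c) ∈ (Walk.cons h q').edges := by simp
      rw [← hedges] at this
      simp at this
  | a, b, Walk.cons (v := c) h p', q, hp, hq, hedges => by
    have he : s(a, c) ∈ q.edges := (hedges _).1 (by simp)
    obtain ⟨c', h', q', rfl, hcc⟩ := first_edge q hq he (by simp)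
    obtain rfl : c = c' := Sym2.congr_right.1 hcc
    have hp' := ((Walk.cons_isPath_iff h p').1 hp).1
    have hq' := ((Walk.cons_isPath_iff h' q').1 hq).1
    have hnp : s(a, c) ∉ p'.edges := fun hh =>
      ((Walk.cons_isPath_iff h p').1 hp).2 (p'.fst_mem_support_of_mem_edges hh)
    have hnq : s(a, c) ∉ q'.edges := fun hh =>
      ((Walk.cons_isPath_iff h' q').1 hq).2 (q'.fst_mem_support_of_mem_edges hh)
    have : p' = q' := by
      refine path_eq_of_edges_eq p' q' hp' hq' fun e => ⟨fun hh => ?_, fun hh => ?_⟩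
      · have := (hedges e).1 (by simp [hh])
        rcases List.mem_cons.1 this with rfl | h2
        · exact absurd hh hnp
        · exact h2
      · have := (hedges e).2 (by simp [hh])
        rcases List.mem_cons.1 this with rfl | h2
        · exact absurd hh hnq
        · exact h2
    rw [this]

lemma count_append' {γ : Type*} [DecidableEq γ] (l m : List γ) (c : γ) :
    (l ++ m).count c = l.count c + m.count c :=
  List.count_append

lemma count_eq_zero_of_not_mem' {γ : Type*} [DecidableEq γ] {c : γ} {l : List γ}
    (h : c ∉ l) : l.count c = 0 :=
  List.count_eq_zero.2 h

lemma isHamiltonian_reverse [DecidableEq V] {a b : V} {p : Γ.Walk a b}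
    (hp : p.IsHamiltonian) : p.reverse.IsHamiltonian := by
  intro c
  rw [Walk.support_reverse, List.count_reverse]
  exact hp c



end A

section B
variable {V : Type*} [DecidableEq V] {Γ : SimpleGraph V}

lemma hamCycle_iff_counts {a : V} {p : Γ.Walk a a} :
    p.IsHamiltonianCycle ↔ p.IsCycle ∧ ∀ b, p.support.tail.count b = 1 :=
  Walk.isHamiltonianCycle_iff_isCycle_and_support_count_tail_eq_one

lemma IsHamiltonianCycle.rotate' {a b : V} {p : Γ.Walk a a} (hp : p.IsHamiltonianCycle)
    (hb : b ∈ p.support) : (p.rotate b hb).IsHamiltonianCycle := by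
  rw [hamCycle_iff_counts] at hp ⊢
  refine ⟨hp.1.rotate hb, fun c => ?_⟩
  rw [(Walk.support_rotate p b hb).perm.count_eq]
  exact hp.2 c

lemma IsHamiltonianCycle.reverse' {a : V} {p : Γ.Walk a a} (hp : p.IsHamiltonianCycle) :
    p.reverse.IsHamiltonianCycle := by
  rw [hamCycle_iff_counts] at hp ⊢
  have hnn : p.support ≠ [] := by simp [Walk.support_ne_nil]
  have hlast : p.support.getLast hnn = a := Walk.getLast_support p
  have h1 : p.support = p.support.dropLast ++ [a] := by
    conv_lhs => rw [← List.dropLast_append_getLast hnn]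
    rw [hlast]
  have h2 : p.support = a :: p.support.tail := Walk.support_eq_cons p
  have hrev : p.reverse.support.tail = p.support.dropLast.reverse := by
    rw [Walk.support_reverse]
    conv_lhs => rw [h1]
    rw [List.reverse_append]
    simp
  have hcnt : ∀ c, p.reverse.support.tail.count c = 1 := by
    intro c
    rw [hrev, List.count_reverse]
    have := hp.2 c
    have hcount : p.support.count c
        = p.support.dropLast.count c + (if a = c then 1 else 0) := by
      conv_lhs => rw [h1]
      simp only [List.count_append, List.count_singleton, beq_iff_eq]
    have hcount2 : p.support.count c
        = (if a = c then 1 else 0) + p.support.tail.count c := by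
      conv_lhs => rw [h2]
      rw [List.count_cons]
      by_cases h : a = c <;> simp [h] <;> omega
    omega
  refine ⟨?_, hcnt⟩
  rw [Walk.isCycle_def]
  exact ⟨hp.1.isTrail.reverse, fun hnil => hp.1.ne_nil (by rw [← Walk.reverse_reverse p, hnil]; rfl),
    List.nodup_iff_count_le_one.2 fun c => le_of_eq (hcnt c)⟩


end B

section Splice
variable {α β : Type*} {G : SimpleGraph α} {H : SimpleGraph β} {G' : SimpleGraph (α ⊕ β)}
  {x y : α} {u v : β}

/-- The inclusion of `H` into `G'`. -/
@[reducible] def homR (hrr : ∀ a b : β, G'.Adj (.inr a) (.inr b) ↔ H.Adj a b) : H →g G' :=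
  ⟨Sum.inr, fun h => (hrr _ _).2 h⟩

/-- The inclusion of `G` minus the edge `xy` into `G'`. -/
@[reducible] def homL (hll : ∀ a b : α, G'.Adj (.inl a) (.inl b) ↔ (G.Adj a b ∧ s(a, b) ≠ s(x, y))) :
    (G.deleteEdges {s(x, y)}) →g G' :=
  ⟨Sum.inl, fun h => by
    rw [SimpleGraph.deleteEdges_adj] at h
    exact (hll _ _).2 ⟨h.1, by simpa using h.2⟩⟩

variable (hlr : ∀ (a : α) (b : β), G'.Adj (.inl a) (.inr b) ↔ ((a = x ∧ b = u) ∨ (a = y ∧ b = v)))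

include hlr in
lemma cross_edge {a : α} {b : β} (h : G'.Adj (.inl a) (.inr b)) :
    s(Sum.inl a, Sum.inr b) = s(Sum.inl x, Sum.inr u)
      ∨ s(Sum.inl a, Sum.inr b) = s(Sum.inl y, Sum.inr v) := by
  rcases (hlr a b).1 h with ⟨rfl, rfl⟩ | ⟨rfl, rfl⟩
  · exact Or.inl rfl
  · exact Or.inr rfl

include hlr in
/-- A walk between the two sides contains one of the two connector edges. -/
lemma mixed_walk_cross : ∀ {s t : α ⊕ β} (w : G'.Walk s t), s.isLeft ≠ t.isLeft →
    s(Sum.inl x, Sum.inr u) ∈ w.edges ∨ s(Sum.inl y, Sum.inr v) ∈ w.edges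
  | s, _, Walk.nil, hst => absurd rfl hst
  | s, t, Walk.cons (v := c) h w', hst => by
    by_cases hc : s.isLeft = c.isLeft
    · rcases mixed_walk_cross w' (hc ▸ hst) with h1 | h1
      · exact Or.inl (by simp [h1])
      · exact Or.inr (by simp [h1])
    · have hcross : s(s, c) = s(Sum.inl x, Sum.inr u) ∨ s(s, c) = s(Sum.inl y, Sum.inr v) := by
        cases s with
        | inl a =>
          cases c with
          | inl a2 => simp at hc
          | inr b2 => exact cross_edge hlr h
        | inr b =>
          cases c with
          | inl a2 =>
            rcases cross_edge hlr h.symm with h1 | h1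
            · exact Or.inl (by rw [← h1, Sym2.eq_swap])
            · exact Or.inr (by rw [← h1, Sym2.eq_swap])
          | inr b2 => simp at hc
      rcases hcross with h1 | h1
      · exact Or.inl (by simp [← h1])
      · exact Or.inr (by simp [← h1])

variable (hrr : ∀ a b : β, G'.Adj (.inr a) (.inr b) ↔ H.Adj a b)
  (hll : ∀ a b : α, G'.Adj (.inl a) (.inl b) ↔ (G.Adj a b ∧ s(a, b) ≠ s(x, y)))

include hlr hrr in
lemma liftR : ∀ (n : ℕ) {b b' : β} (w : G'.Walk (.inr b) (.inr b')), w.length ≤ n →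
    s(Sum.inl x, Sum.inr u) ∉ w.edges → s(Sum.inl y, Sum.inr v) ∉ w.edges →
    ∃ p : H.Walk b b', w = p.map (homR hrr)
  | 0, b, b', w, hn, h1, h2 => by
    cases w with
    | nil => exact ⟨Walk.nil, rfl⟩
    | cons h w' => simp at hn
  | (n + 1), b, b', w, hn, h1, h2 => by
    cases w with
    | nil => exact ⟨Walk.nil, rfl⟩
    | cons h w' =>
      rename_i c
      cases c with
      | inl a =>
        exfalso
        rcases cross_edge hlr h.symm with hc | hc
        · exact h1 (by rw [← Sym2.eq_swap] at hc; simp [← hc])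
        · exact h2 (by rw [← Sym2.eq_swap] at hc; simp [← hc])
      | inr b2 =>
        obtain ⟨p', hp'⟩ := liftR n w' (by simp [Walk.length_cons] at hn; omega) (fun hh => h1 (by simp [hh]))
          (fun hh => h2 (by simp [hh]))
        exact ⟨Walk.cons ((hrr _ _).1 h) p', by rw [Walk.map_cons, ← hp']⟩

include hlr hll in
lemma liftL : ∀ (n : ℕ) {a a' : α} (w : G'.Walk (.inl a) (.inl a')), w.length ≤ n →
    s(Sum.inl x, Sum.inr u) ∉ w.edges → s(Sum.inl y, Sum.inr v) ∉ w.edges →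
    ∃ q : (G.deleteEdges {s(x, y)}).Walk a a', w = q.map (homL hll)
  | 0, a, a', w, hn, h1, h2 => by
    cases w with
    | nil => exact ⟨Walk.nil, rfl⟩
    | cons h w' => simp at hn
  | (n + 1), a, a', w, hn, h1, h2 => by
    cases w with
    | nil => exact ⟨Walk.nil, rfl⟩
    | cons h w' =>
      rename_i c
      cases c with
      | inr b =>
        exfalso
        rcases cross_edge hlr h with hc | hc
        · exact h1 (by simp [← hc])
        · exact h2 (by simp [← hc])
      | inl a2 =>
        obtain ⟨q', hq'⟩ := liftL n w' (by simp [Walk.length_cons] at hn; omega) (fun hh => h1 (by simp [hh]))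
          (fun hh => h2 (by simp [hh]))
        have hadj : (G.deleteEdges {s(x, y)}).Adj a a2 := by
          rw [SimpleGraph.deleteEdges_adj]
          have := (hll _ _).1 h
          exact ⟨this.1, by simpa using this.2⟩
        exact ⟨Walk.cons hadj q', by rw [Walk.map_cons, ← hq']⟩

end Splice


section D
variable {V : Type*} {Γ : SimpleGraph V}


/-- An edge of a cycle containing the base point is the first edge of the cycle or
of its reverse. -/
lemma cycle_first_or_reverse {a : V} (d : Γ.Walk a a) (hd : d.IsCycle) {e : Sym2 V}
    (he : e ∈ d.edges) (ha : a ∈ e) :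
    ∃ (b : V) (h : Γ.Adj a b) (t : Γ.Walk b a),
      (d = Walk.cons h t ∨ d.reverse = Walk.cons h t) ∧ e = s(a, b) := by
  cases d with
  | nil => exact absurd rfl hd.ne_nil
  | cons h0 t0 =>
    rename_i b0
    by_cases hfirst : e = s(a, b0)
    · exact ⟨b0, h0, t0, Or.inl rfl, hfirst⟩
    · have het : e ∈ t0.edges := by
        rcases List.mem_cons.1 (by simpa using he) with h1 | h1
        · exact absurd h1 hfirst
        · exact h1
      have ht0trail : t0.IsTrail := ((Walk.isTrail_cons h0 t0).1 hd.isTrail).1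
      have ht0nodup : t0.support.Nodup := by
        have := ((Walk.isCycle_def _).1 hd).2.2
        simpa using this
      have ht0path : t0.IsPath := ⟨ht0trail, ht0nodup⟩
      have herev : e ∈ t0.reverse.edges := by rw [Walk.edges_reverse]; simpa using het
      obtain ⟨c, h', q', hq'eq, hee⟩ := first_edge t0.reverse ht0path.reverse herev ha
      refine ⟨c, h', q'.append (Walk.cons h0.symm Walk.nil), Or.inr ?_, hee⟩
      rw [Walk.reverse_cons, hq'eq, Walk.cons_append]

lemma notmem_inr_mapl {α β : Type*} (b : β) (e0 : Sym2 α) :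
    (Sum.inr b : α ⊕ β) ∉ Sym2.map Sum.inl e0 := by
  simp [Sym2.mem_map]

lemma notmem_inl_mapr {α β : Type*} (a : α) (e0 : Sym2 β) :
    (Sum.inl a : α ⊕ β) ∉ Sym2.map Sum.inr e0 := by
  simp [Sym2.mem_map]

lemma mapl_ne_mapr {α β : Type*} (e0 : Sym2 α) (e0' : Sym2 β) :
    Sym2.map Sum.inl e0 ≠ Sym2.map Sum.inr e0' := by
  induction e0 using Sym2.inductionOn with
  | hf c d =>
    intro h
    have : (Sum.inl c : α ⊕ β) ∈ Sym2.map Sum.inr e0' := by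
      rw [← h]; simp
    exact notmem_inl_mapr c e0' this
end D

section Main
variable {α β : Type*} [DecidableEq α] [DecidableEq β]
  {G : SimpleGraph α} {H : SimpleGraph β} {G' : SimpleGraph (α ⊕ β)}
  {x y : α} {u v : β}
  (hlr : ∀ (a : α) (b : β), G'.Adj (.inl a) (.inr b) ↔ ((a = x ∧ b = u) ∨ (a = y ∧ b = v)))
  (hrr : ∀ a b : β, G'.Adj (.inr a) (.inr b) ↔ H.Adj a b)
  (hll : ∀ a b : α, G'.Adj (.inl a) (.inl b) ↔ (G.Adj a b ∧ s(a, b) ≠ s(x, y)))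
  (huv : u ≠ v)

include hlr hrr hll huv in
lemma splice_hamCycle
    {p : H.Walk u v} (hp : p.IsHamiltonian)
    {q : (G.deleteEdges {s(x, y)}).Walk y x} (hq : q.IsHamiltonian) :
    ∃ c : G'.Walk (Sum.inl x) (Sum.inl x), c.IsHamiltonianCycle ∧
      {e | e ∈ c.edges} = {s(Sum.inl x, Sum.inr u), s(Sum.inl y, Sum.inr v)}
        ∪ Sym2.map Sum.inr '' {e | e ∈ p.edges} ∪ Sym2.map Sum.inl '' {e | e ∈ q.edges} := by
  have h1 : G'.Adj (Sum.inl x) (Sum.inr u) := (hlr x u).2 (Or.inl ⟨rfl, rfl⟩)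
  have hcr : G'.Adj (Sum.inr v) (Sum.inl y) := ((hlr y v).2 (Or.inr ⟨rfl, rfl⟩)).symm
  set w : G'.Walk (Sum.inl x) (Sum.inl x) :=
    Walk.cons h1 ((p.map (homR hrr)).append (Walk.cons hcr (q.map (homL hll)))) with hw
  have hRfun : ⇑(homR hrr : H →g G') = Sum.inr := rfl
  have hLfun : ⇑(homL hll : (G.deleteEdges {s(x, y)}) →g G') = Sum.inl := rfl
  have hsupp : w.support = Sum.inl x :: (p.support.map Sum.inr ++ q.support.map Sum.inl) := by
    simp [hw, Walk.support_cons, Walk.support_append, Walk.support_map, hRfun, hLfun]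
  have hedges : w.edges = s(Sum.inl x, Sum.inr u) ::
      (p.edges.map (Sym2.map Sum.inr) ++ s(Sum.inr v, Sum.inl y) ::
        q.edges.map (Sym2.map Sum.inl)) := by
    simp [hw, Walk.edges_cons, Walk.edges_append, Walk.edges_map, hRfun, hLfun]
  -- nodup facts
  have hpnodupe : (p.edges.map (Sym2.map (Sum.inr : β → α ⊕ β))).Nodup :=
    hp.isPath.isTrail.edges_nodup.map (Sym2.map.injective Sum.inr_injective)
  have hqnodupe : (q.edges.map (Sym2.map (Sum.inl : α → α ⊕ β))).Nodup :=
    hq.isPath.isTrail.edges_nodup.map (Sym2.map.injective Sum.inl_injective)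
  have hnotinR : ∀ e ∈ p.edges.map (Sym2.map (Sum.inr : β → α ⊕ β)),
      ∀ a : α, (Sum.inl a : α ⊕ β) ∉ e := by
    rintro e he a ha
    obtain ⟨e0, -, rfl⟩ := List.mem_map.1 he
    exact notmem_inl_mapr a e0 ha
  have hnotinL : ∀ e ∈ q.edges.map (Sym2.map (Sum.inl : α → α ⊕ β)),
      ∀ b : β, (Sum.inr b : α ⊕ β) ∉ e := by
    rintro e he b hb
    obtain ⟨e0, -, rfl⟩ := List.mem_map.1 he
    exact notmem_inr_mapl b e0 hb
  have hdisj : ∀ e ∈ p.edges.map (Sym2.map (Sum.inr : β → α ⊕ β)),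
      e ∉ q.edges.map (Sym2.map (Sum.inl : α → α ⊕ β)) := by
    intro e he1 he2
    obtain ⟨e0, -, rfl⟩ := List.mem_map.1 he1
    obtain ⟨e0', -, heq⟩ := List.mem_map.1 he2
    exact mapl_ne_mapr e0' e0 heq
  have he1ne2 : s(Sum.inl x, Sum.inr u) ≠ (s(Sum.inr v, Sum.inl y) : Sym2 (α ⊕ β)) := by
    intro hcontra
    rw [Sym2.eq_iff] at hcontra
    rcases hcontra with ⟨h2, -⟩ | ⟨-, h2⟩
    · simp at h2
    · exact huv (Sum.inr_injective h2)
  have hedges_nodup : w.edges.Nodup := by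
    rw [hedges]
    refine List.nodup_cons.2 ⟨?_, ?_⟩
    · intro hmem
      rcases List.mem_append.1 hmem with h2 | h2
      · exact hnotinR _ h2 x (by simp)
      · rcases List.mem_cons.1 h2 with h3 | h3
        · exact he1ne2 h3
        · exact hnotinL _ h3 u (by simp)
    · refine List.Nodup.append hpnodupe (List.nodup_cons.2 ⟨?_, hqnodupe⟩) ?_
      · intro hmem
        exact hnotinL _ hmem v (by simp)
      · intro e he1 he2
        rcases List.mem_cons.1 he2 with rfl | h3
        · exact hnotinR _ he1 y (by simp)
        · exact hdisj e he1 h3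
  have hsupp_tail_count : ∀ c : α ⊕ β,
      @List.count (α ⊕ β) instBEqOfDecidableEq c
        (p.support.map Sum.inr ++ q.support.map Sum.inl) = 1 := by
    intro c
    rw [count_append' _ _ _]
    cases c with
    | inl a =>
      rw [count_eq_zero_of_not_mem' (by simp),
        @List.count_map_of_injective _ _ _ _ instBEqOfDecidableEq _ _ _ Sum.inl_injective]
      simpa using hq a
    | inr b =>
      rw [@List.count_map_of_injective _ _ _ _ instBEqOfDecidableEq _ _ _ Sum.inr_injective,
        count_eq_zero_of_not_mem' (c := Sum.inr b) (l := q.support.map Sum.inl) (by simp)]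
      simpa using hp b
  have hcyc : w.IsHamiltonianCycle := by
    rw [hamCycle_iff_counts]
    constructor
    · rw [Walk.isCycle_def]
      refine ⟨(Walk.isTrail_def _).2 hedges_nodup, by simp [hw, Walk.not_nil_cons], ?_⟩
      rw [hsupp]
      rw [List.tail_cons]
      exact (@List.nodup_iff_count_le_one _ instBEqOfDecidableEq _ _).2 fun c => le_of_eq (hsupp_tail_count c)
    · intro c
      rw [hsupp, List.tail_cons]
      exact hsupp_tail_count c
  refine ⟨w, hcyc, ?_⟩
  ext e
  simp only [Set.mem_setOf_eq, hedges, List.mem_cons, List.mem_append, List.mem_map,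
    Set.mem_union, Set.mem_insert_iff, Set.mem_singleton_iff, Set.mem_image]
  constructor
  · rintro (rfl | ⟨e0, he0, rfl⟩ | rfl | ⟨e0, he0, rfl⟩)
    · exact Or.inl (Or.inl (Or.inl rfl))
    · exact Or.inl (Or.inr ⟨e0, he0, rfl⟩)
    · exact Or.inl (Or.inl (Or.inr Sym2.eq_swap))
    · exact Or.inr ⟨e0, he0, rfl⟩
  · rintro (((rfl | rfl) | ⟨e0, he0, rfl⟩) | ⟨e0, he0, rfl⟩)
    · exact Or.inl rfl
    · exact Or.inr (Or.inr (Or.inl Sym2.eq_swap))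
    · exact Or.inr (Or.inl ⟨e0, he0, rfl⟩)
    · exact Or.inr (Or.inr (Or.inr ⟨e0, he0, rfl⟩))

include hlr hrr hll in
lemma split : ∀ (n : ℕ) {b : β} {a : α} (w : G'.Walk (.inr b) (.inl a)), w.length ≤ n →
    w.IsTrail → s(Sum.inl x, Sum.inr u) ∉ w.edges →
    ∃ (p : H.Walk b v) (q : (G.deleteEdges {s(x, y)}).Walk y a),
      w = (p.map (homR hrr)).append
        (Walk.cons (((hlr y v).2 (Or.inr ⟨rfl, rfl⟩)).symm) (q.map (homL hll)))
  | 0, b, a, w, hn, ht, h1 => by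
    cases w with
    | cons h w' => simp at hn
  | (n + 1), b, a, w, hn, ht, h1 => by
    cases w with
    | cons h w' =>
      rename_i c
      have hn' : w'.length ≤ n := by simp [Walk.length_cons] at hn; omega
      have ht' : w'.IsTrail := ((Walk.isTrail_cons _ _).1 ht).1
      have hfst : s(Sum.inr b, c) ∉ w'.edges := ((Walk.isTrail_cons _ _).1 ht).2
      cases c with
      | inl a2 =>
        rcases cross_edge hlr h.symm with hc | hc
        · exact absurd (by rw [hc.symm.trans Sym2.eq_swap]; simp) h1
        · rw [Sym2.eq_iff] at hc
          rcases hc with ⟨hc1, hc2⟩ | ⟨hc1, -⟩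
          · obtain rfl : a2 = y := by exact Sum.inl_injective hc1
            obtain rfl : b = v := by exact Sum.inr_injective hc2
            obtain ⟨q, hq'⟩ := liftL hlr hll n w' hn' (fun hh => h1 (by simp [hh]))
              (fun hh => hfst (by rwa [Sym2.eq_swap] at hh))
            exact ⟨Walk.nil, q, by rw [hq']; rfl⟩
          · simp at hc1
      | inr b2 =>
        obtain ⟨p', q, heq'⟩ := split n w' hn' ht' (fun hh => h1 (by simp [hh]))
        exact ⟨Walk.cons ((hrr _ _).1 h) p', q,
          by rw [Walk.map_cons, Walk.cons_append, ← heq']⟩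

lemma extractG (hxy : G.Adj x y) {a0 : α} {c : G.Walk a0 a0} (hc : c.IsHamiltonianCycle)
    (he : s(x, y) ∈ c.edges) :
    ∃ q : (G.deleteEdges {s(x, y)}).Walk y x, q.IsHamiltonian ∧
      s(x, y) ∉ q.edges ∧ {e | e ∈ c.edges} = insert s(x, y) {e | e ∈ q.edges} := by
  have hxm : x ∈ c.support := hc.mem_support x
  have hdham := IsHamiltonianCycle.rotate' hc hxm
  have hdedges : ∀ e, e ∈ (c.rotate x hxm).edges ↔ e ∈ c.edges :=
    fun e => (Walk.rotate_edges c _ hxm).mem_iff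
  obtain ⟨b, hadj, t, hcase, hfe⟩ :=
    cycle_first_or_reverse (c.rotate x hxm) hdham.isCycle ((hdedges _).2 he) (by simp)
  obtain rfl : y = b := Sym2.congr_right.1 hfe
  obtain ⟨D, hDham, hDedges, hDeq⟩ : ∃ D : G.Walk x x, D.IsHamiltonianCycle ∧
      (∀ e, e ∈ D.edges ↔ e ∈ c.edges) ∧ D = Walk.cons hadj t := by
    rcases hcase with hcase | hcase
    · exact ⟨_, hdham, hdedges, hcase⟩
    · exact ⟨_, IsHamiltonianCycle.reverse' hdham,
        fun e => by rw [Walk.edges_reverse, List.mem_reverse]; exact hdedges e, hcase⟩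
  have htrailpair := (Walk.isTrail_cons hadj t).1 (hDeq ▸ hDham.isCycle.isTrail)
  have htne : s(x, y) ∉ t.edges := htrailpair.2
  have htham : t.IsHamiltonian := by
    intro z
    have hcount := (hamCycle_iff_counts.1 hDham).2 z
    rw [hDeq] at hcount
    simpa using hcount
  have hsub : ∀ e ∈ t.edges, e ∈ (G.deleteEdges {s(x, y)}).edgeSet := by
    intro e he'
    rw [SimpleGraph.edgeSet_deleteEdges]
    exact ⟨t.edges_subset_edgeSet he', by
      simp only [Set.mem_singleton_iff]
      rintro rfl
      exact htne he'⟩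
  refine ⟨t.transfer _ hsub, ?_, ?_, ?_⟩
  · intro z
    rw [Walk.support_transfer]
    exact htham z
  · rw [Walk.edges_transfer]
    exact htne
  · ext e
    rw [Set.mem_setOf_eq, ← hDedges e, hDeq, Walk.edges_transfer]
    simp [Set.mem_insert_iff]

lemma buildG (hxy : G.Adj x y) {q : (G.deleteEdges {s(x, y)}).Walk y x}
    (hq : q.IsHamiltonian) :
    ∃ c : G.Walk x x, c.IsHamiltonianCycle ∧ s(x, y) ∈ c.edges ∧
      {e | e ∈ c.edges} = insert s(x, y) {e | e ∈ q.edges} := by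
  have hsub : ∀ e ∈ q.edges, e ∈ G.edgeSet := by
    intro e he
    have := q.edges_subset_edgeSet he
    rw [SimpleGraph.edgeSet_deleteEdges] at this
    exact this.1
  have hnotq : s(x, y) ∉ q.edges := by
    intro hmem
    have := q.edges_subset_edgeSet hmem
    rw [SimpleGraph.edgeSet_deleteEdges] at this
    exact this.2 rfl
  set q' := q.transfer G hsub with hq'
  have hq'edges : q'.edges = q.edges := Walk.edges_transfer _ _
  have hq'supp : q'.support = q.support := Walk.support_transfer _ _
  refine ⟨Walk.cons hxy q', ?_, by simp, ?_⟩
  · rw [hamCycle_iff_counts]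
    constructor
    · rw [Walk.isCycle_def]
      refine ⟨(Walk.isTrail_def _).2 ?_, by simp, ?_⟩
      · rw [Walk.edges_cons, List.nodup_cons, hq'edges]
        exact ⟨hnotq, hq.isPath.isTrail.edges_nodup⟩
      · rw [Walk.support_cons, List.tail_cons, hq'supp]
        exact List.nodup_iff_count_le_one.2 fun z => le_of_eq (hq z)
    · intro z
      rw [Walk.support_cons, List.tail_cons, hq'supp]
      exact hq z
  · ext e
    simp [hq'edges, Set.mem_insert_iff]

include hlr hrr hll huv in
lemma decompose {a0 : α ⊕ β} {c' : G'.Walk a0 a0} (hc' : c'.IsHamiltonianCycle) :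
    ∃ (p : H.Walk u v) (q : (G.deleteEdges {s(x, y)}).Walk y x),
      p.IsHamiltonian ∧ q.IsHamiltonian ∧
      {e | e ∈ c'.edges} = {s(Sum.inl x, Sum.inr u), s(Sum.inl y, Sum.inr v)}
        ∪ Sym2.map Sum.inr '' {e | e ∈ p.edges} ∪ Sym2.map Sum.inl '' {e | e ∈ q.edges} := by
  have hRfun : ⇑(homR hrr : H →g G') = Sum.inr := rfl
  have hLfun : ⇑(homL hll : (G.deleteEdges {s(x, y)}) →g G') = Sum.inl := rfl
  have hxm : (Sum.inl x : α ⊕ β) ∈ c'.support := hc'.mem_support _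
  have hdham := IsHamiltonianCycle.rotate' hc' hxm
  have hdedges : ∀ e, e ∈ (c'.rotate _ hxm).edges ↔ e ∈ c'.edges :=
    fun e => (Walk.rotate_edges c' _ hxm).mem_iff
  set d := c'.rotate _ hxm with hddef
  have hum : (Sum.inr u : α ⊕ β) ∈ d.support := hdham.mem_support _
  have he1 : s(Sum.inl x, Sum.inr u) ∈ d.edges := by
    have hsplit : d.edges = (d.takeUntil _ hum).edges ++ (d.dropUntil _ hum).edges := by
      rw [← Walk.edges_append, Walk.take_spec]
    have h1 := mixed_walk_cross hlr (d.takeUntil _ hum) (by simp)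
    have h2 := mixed_walk_cross hlr (d.dropUntil _ hum) (by simp)
    have hnodup : d.edges.Nodup := hdham.isCycle.isTrail.edges_nodup
    rw [hsplit] at hnodup
    have hdisj := (List.nodup_append.1 hnodup).2.2
    rcases h1 with h1 | h1
    · rw [hsplit]; exact List.mem_append.2 (Or.inl h1)
    · rcases h2 with h2 | h2
      · rw [hsplit]; exact List.mem_append.2 (Or.inr h2)
      · exact absurd h2 (fun hh => hdisj _ h1 _ hh rfl)
  obtain ⟨b, hadj, t, hcase, hfe⟩ := cycle_first_or_reverse d hdham.isCycle he1 (by simp)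
  obtain rfl : Sum.inr u = b := Sym2.congr_right.1 hfe
  obtain ⟨D, hDham, hDedges, hDeq⟩ : ∃ D : G'.Walk (Sum.inl x) (Sum.inl x),
      D.IsHamiltonianCycle ∧ (∀ e, e ∈ D.edges ↔ e ∈ c'.edges) ∧ D = Walk.cons hadj t := by
    rcases hcase with hcase | hcase
    · exact ⟨_, hdham, hdedges, hcase⟩
    · exact ⟨_, IsHamiltonianCycle.reverse' hdham,
        fun e => by rw [Walk.edges_reverse, List.mem_reverse]; exact hdedges e, hcase⟩
  have htrailpair := (Walk.isTrail_cons hadj t).1 (hDeq ▸ hDham.isCycle.isTrail)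
  obtain ⟨p, q, heq⟩ := split hlr hrr hll t.length t le_rfl htrailpair.1 htrailpair.2
  have hsupt : t.support = p.support.map Sum.inr ++ q.support.map Sum.inl := by
    rw [heq]
    simp [Walk.support_append, Walk.support_map, hRfun, hLfun]
  have hcounts : ∀ z, @List.count (α ⊕ β) instBEqOfDecidableEq z
      (p.support.map Sum.inr ++ q.support.map Sum.inl) = 1 := by
    intro z
    have hcount := (hamCycle_iff_counts.1 hDham).2 z
    rw [hDeq] at hcount
    rw [Walk.support_cons, List.tail_cons, hsupt] at hcount
    exact hcount
  have hpham : p.IsHamiltonian := by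
    intro z
    have := hcounts (Sum.inr z)
    rw [count_append' _ _ _, @List.count_map_of_injective _ _ _ _ instBEqOfDecidableEq _ _ _ Sum.inr_injective,
      count_eq_zero_of_not_mem' (c := Sum.inr z) (l := q.support.map Sum.inl) (by simp)]
      at this
    simpa using this
  have hqham : q.IsHamiltonian := by
    intro z
    have := hcounts (Sum.inl z)
    rw [count_append' _ _ _,
      count_eq_zero_of_not_mem' (c := Sum.inl z) (l := p.support.map Sum.inr) (by simp),
      @List.count_map_of_injective _ _ _ _ instBEqOfDecidableEq _ _ _ Sum.inl_injective] at this
    simpa using this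
  refine ⟨p, q, hpham, hqham, ?_⟩
  have hedD : D.edges = s(Sum.inl x, Sum.inr u) ::
      (p.edges.map (Sym2.map Sum.inr) ++ s(Sum.inr v, Sum.inl y) ::
        q.edges.map (Sym2.map Sum.inl)) := by
    rw [hDeq, Walk.edges_cons, heq]
    simp [Walk.edges_append, Walk.edges_map, hRfun, hLfun]
  ext e
  rw [Set.mem_setOf_eq, ← hDedges e]
  simp only [hedD, List.mem_cons, List.mem_append, List.mem_map,
    Set.mem_union, Set.mem_insert_iff, Set.mem_singleton_iff, Set.mem_image, Set.mem_setOf_eq]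
  constructor
  · rintro (rfl | ⟨e0, he0, rfl⟩ | rfl | ⟨e0, he0, rfl⟩)
    · exact Or.inl (Or.inl (Or.inl rfl))
    · exact Or.inl (Or.inr ⟨e0, he0, rfl⟩)
    · exact Or.inl (Or.inl (Or.inr Sym2.eq_swap))
    · exact Or.inr ⟨e0, he0, rfl⟩
  · rintro (((rfl | rfl) | ⟨e0, he0, rfl⟩) | ⟨e0, he0, rfl⟩)
    · exact Or.inl rfl
    · exact Or.inr (Or.inr (Or.inl Sym2.eq_swap))
    · exact Or.inr (Or.inl ⟨e0, he0, rfl⟩)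
    · exact Or.inr (Or.inr (Or.inr ⟨e0, he0, rfl⟩))

end Main

end Stmt10Aux
section Final

open Stmt10Aux

/-- Splicing a gadget `H` into an edge of an `r`-regular graph `G`: the result
is `r`-regular and its number of pairwise distinct Hamiltonian cycles is
`c1 * c2`. -/
theorem stmt10 {α β : Type*} [Fintype α] [Fintype β] [DecidableEq α] [DecidableEq β]
    (r : ℕ) (hr : 2 ≤ r)
    (G : SimpleGraph α) (hreg : ∀ a : α, (G.neighborSet a).ncard = r)
    (x y : α) (hxy : G.Adj x y) (c1 : ℕ)
    (hc1 : {s : Set (Sym2 α) | ∃ (a : α) (c : G.Walk a a),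
        c.IsHamiltonianCycle ∧ s(x, y) ∈ c.edges ∧ s = {e | e ∈ c.edges}}.ncard = c1)
    (H : SimpleGraph β) (u v : β) (huv : u ≠ v)
    (hu : (H.neighborSet u).ncard = r - 1) (hv : (H.neighborSet v).ncard = r - 1)
    (hw : ∀ w : β, w ≠ u → w ≠ v → (H.neighborSet w).ncard = r)
    (c2 : ℕ) (hc2 : Nat.card {p : H.Walk u v // p.IsHamiltonian} = c2)
    (G' : SimpleGraph (α ⊕ β))
    (hll : ∀ a b : α, G'.Adj (.inl a) (.inl b) ↔ (G.Adj a b ∧ s(a, b) ≠ s(x, y)))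
    (hrr : ∀ a b : β, G'.Adj (.inr a) (.inr b) ↔ H.Adj a b)
    (hlr : ∀ (a : α) (b : β), G'.Adj (.inl a) (.inr b) ↔ ((a = x ∧ b = u) ∨ (a = y ∧ b = v))) :
    (∀ p : α ⊕ β, (G'.neighborSet p).ncard = r)
    ∧ {s : Set (Sym2 (α ⊕ β)) | ∃ (a : α ⊕ β) (c : G'.Walk a a),
        c.IsHamiltonianCycle ∧ s = {e | e ∈ c.edges}}.ncard = c1 * c2 := by
  have hxney : x ≠ y := hxy.ne
  constructor
  · -- regularity
    rintro (a | b)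
    · by_cases hax : a = x
      · subst hax
        have hset : G'.neighborSet (Sum.inl a) =
            insert (Sum.inr u) (Sum.inl '' (G.neighborSet a \ {y})) := by
          ext z
          cases z with
          | inl b =>
            simp only [SimpleGraph.mem_neighborSet, hll, Set.mem_insert_iff, Set.mem_image,
              Set.mem_diff, Set.mem_singleton_iff]
            constructor
            · rintro ⟨hadj, hne⟩
              refine Or.inr ⟨b, ⟨hadj, ?_⟩, rfl⟩
              rintro rfl
              exact hne rfl
            · rintro (h | ⟨b', ⟨hadj, hne⟩, hb'⟩)
              · simp at h
              · obtain rfl : b' = b := Sum.inl_injective hb'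
                exact ⟨hadj, fun hc => hne (Sym2.congr_right.1 hc)⟩
          | inr b =>
            simp only [SimpleGraph.mem_neighborSet, hlr, Set.mem_insert_iff, Set.mem_image,
              Set.mem_diff, Set.mem_singleton_iff]
            constructor
            · rintro (⟨-, rfl⟩ | ⟨hay, -⟩)
              · exact Or.inl rfl
              · exact absurd hay hxney
            · rintro (h | ⟨b', -, hb'⟩)
              · exact Or.inl ⟨trivial, Sum.inr_injective h⟩
              · simp at hb'
        rw [hset, Set.ncard_insert_of_notMem (by simp),
          Set.ncard_image_of_injective _ Sum.inl_injective,
          Set.ncard_diff_singleton_of_mem (by simpa using hxy), hreg]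
        omega
      · by_cases hay : a = y
        · subst hay
          have hset : G'.neighborSet (Sum.inl a) =
              insert (Sum.inr v) (Sum.inl '' (G.neighborSet a \ {x})) := by
            ext z
            cases z with
            | inl b =>
              simp only [SimpleGraph.mem_neighborSet, hll, Set.mem_insert_iff, Set.mem_image,
                Set.mem_diff, Set.mem_singleton_iff]
              constructor
              · rintro ⟨hadj, hne⟩
                refine Or.inr ⟨b, ⟨hadj, ?_⟩, rfl⟩
                rintro rfl
                exact hne (Sym2.eq_swap)
              · rintro (h | ⟨b', ⟨hadj, hne⟩, hb'⟩)
                · simp at h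
                · obtain rfl : b' = b := Sum.inl_injective hb'
                  refine ⟨hadj, fun hc => hne ?_⟩
                  rw [Sym2.eq_iff] at hc
                  rcases hc with ⟨h1, -⟩ | ⟨-, h2⟩
                  · exact absurd h1 hax
                  · exact h2
            | inr b =>
              simp only [SimpleGraph.mem_neighborSet, hlr, Set.mem_insert_iff, Set.mem_image,
                Set.mem_diff, Set.mem_singleton_iff]
              constructor
              · rintro (⟨hya, -⟩ | ⟨-, rfl⟩)
                · exact absurd hya hax
                · exact Or.inl rfl
              · rintro (h | ⟨b', -, hb'⟩)
                · exact Or.inr ⟨trivial, Sum.inr_injective h⟩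
                · simp at hb'
          rw [hset, Set.ncard_insert_of_notMem (by simp),
            Set.ncard_image_of_injective _ Sum.inl_injective,
            Set.ncard_diff_singleton_of_mem (by simpa using hxy.symm), hreg]
          omega
        · have hset : G'.neighborSet (Sum.inl a) = Sum.inl '' G.neighborSet a := by
            ext z
            cases z with
            | inl b =>
              simp only [SimpleGraph.mem_neighborSet, hll, Set.mem_image]
              constructor
              · rintro ⟨hadj, -⟩
                exact ⟨b, hadj, rfl⟩
              · rintro ⟨b', hadj, hb'⟩
                obtain rfl : b' = b := Sum.inl_injective hb'
                refine ⟨hadj, fun hc => ?_⟩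
                rw [Sym2.eq_iff] at hc
                rcases hc with ⟨h1, -⟩ | ⟨h1, -⟩
                · exact hax h1
                · exact hay h1
            | inr b =>
              simp only [SimpleGraph.mem_neighborSet, hlr, Set.mem_image]
              constructor
              · rintro (⟨h1, -⟩ | ⟨h1, -⟩)
                · exact absurd h1 hax
                · exact absurd h1 hay
              · rintro ⟨b', -, hb'⟩
                simp at hb'
          rw [hset, Set.ncard_image_of_injective _ Sum.inl_injective, hreg]
    · by_cases hbu : b = u
      · subst hbu
        have hset : G'.neighborSet (Sum.inr b) =
            insert (Sum.inl x) (Sum.inr '' H.neighborSet b) := by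
          ext z
          cases z with
          | inl a =>
            have : G'.Adj (Sum.inr b) (Sum.inl a) ↔ G'.Adj (Sum.inl a) (Sum.inr b) :=
              ⟨fun h => h.symm, fun h => h.symm⟩
            simp only [SimpleGraph.mem_neighborSet, this, hlr, Set.mem_insert_iff,
              Set.mem_image]
            constructor
            · rintro (⟨rfl, -⟩ | ⟨-, hbv⟩)
              · exact Or.inl rfl
              · exact absurd hbv huv
            · rintro (h | ⟨b', -, hb'⟩)
              · exact Or.inl ⟨Sum.inl_injective h, trivial⟩
              · simp at hb'
          | inr b2 =>
            simp only [SimpleGraph.mem_neighborSet, hrr, Set.mem_insert_iff, Set.mem_image]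
            constructor
            · intro h
              exact Or.inr ⟨b2, h, rfl⟩
            · rintro (h | ⟨b', h, hb'⟩)
              · simp at h
              · obtain rfl : b' = b2 := Sum.inr_injective hb'
                exact h
        rw [hset, Set.ncard_insert_of_notMem (by simp),
          Set.ncard_image_of_injective _ Sum.inr_injective, hu]
        omega
      · by_cases hbv : b = v
        · subst hbv
          have hset : G'.neighborSet (Sum.inr b) =
              insert (Sum.inl y) (Sum.inr '' H.neighborSet b) := by
            ext z
            cases z with
            | inl a =>
              have : G'.Adj (Sum.inr b) (Sum.inl a) ↔ G'.Adj (Sum.inl a) (Sum.inr b) :=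
                ⟨fun h => h.symm, fun h => h.symm⟩
              simp only [SimpleGraph.mem_neighborSet, this, hlr, Set.mem_insert_iff,
                Set.mem_image]
              constructor
              · rintro (⟨-, hbu'⟩ | ⟨rfl, -⟩)
                · exact absurd hbu' hbu
                · exact Or.inl rfl
              · rintro (h | ⟨b', -, hb'⟩)
                · exact Or.inr ⟨Sum.inl_injective h, trivial⟩
                · simp at hb'
            | inr b2 =>
              simp only [SimpleGraph.mem_neighborSet, hrr, Set.mem_insert_iff, Set.mem_image]
              constructor
              · intro h
                exact Or.inr ⟨b2, h, rfl⟩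
              · rintro (h | ⟨b', h, hb'⟩)
                · simp at h
                · obtain rfl : b' = b2 := Sum.inr_injective hb'
                  exact h
          rw [hset, Set.ncard_insert_of_notMem (by simp),
            Set.ncard_image_of_injective _ Sum.inr_injective, hv]
          omega
        · have hset : G'.neighborSet (Sum.inr b) = Sum.inr '' H.neighborSet b := by
            ext z
            cases z with
            | inl a =>
              have : G'.Adj (Sum.inr b) (Sum.inl a) ↔ G'.Adj (Sum.inl a) (Sum.inr b) :=
                ⟨fun h => h.symm, fun h => h.symm⟩
              simp only [SimpleGraph.mem_neighborSet, this, hlr, Set.mem_image]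
              constructor
              · rintro (⟨-, h1⟩ | ⟨-, h1⟩)
                · exact absurd h1 hbu
                · exact absurd h1 hbv
              · rintro ⟨b', -, hb'⟩
                simp at hb'
            | inr b2 =>
              simp only [SimpleGraph.mem_neighborSet, hrr, Set.mem_image]
              constructor
              · intro h
                exact ⟨b2, h, rfl⟩
              · rintro ⟨b', h, hb'⟩
                obtain rfl : b' = b2 := Sum.inr_injective hb'
                exact h
          rw [hset, Set.ncard_image_of_injective _ Sum.inr_injective, hw b hbu hbv]
  · -- counting
    classical
    set S : Set (Set (Sym2 α)) := {s : Set (Sym2 α) | ∃ (a : α) (c : G.Walk a a),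
        c.IsHamiltonianCycle ∧ s(x, y) ∈ c.edges ∧ s = {e | e ∈ c.edges}} with hS
    set T : Set (Set (Sym2 (α ⊕ β))) := {s : Set (Sym2 (α ⊕ β)) |
        ∃ (a : α ⊕ β) (c : G'.Walk a a),
          c.IsHamiltonianCycle ∧ s = {e | e ∈ c.edges}} with hT
    set Fm : Set (Sym2 α) → H.Walk u v → Set (Sym2 (α ⊕ β)) := fun s p =>
      {s(Sum.inl x, Sum.inr u), s(Sum.inl y, Sum.inr v)}
        ∪ Sym2.map Sum.inr '' {e | e ∈ p.edges}
        ∪ Sym2.map Sum.inl '' (s \ {s(x, y)}) with hFm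
    have hclaimL : ∀ (s : Set (Sym2 α)) (p : H.Walk u v),
        {e0 : Sym2 α | Sym2.map Sum.inl e0 ∈ Fm s p} = s \ {s(x, y)} := by
      intro s p
      ext e0
      simp only [hFm, Set.mem_setOf_eq, Set.mem_union, Set.mem_insert_iff,
        Set.mem_singleton_iff, Set.mem_image]
      constructor
      · rintro (((h | h) | ⟨e1, -, heq⟩) | ⟨e1, he1, heq⟩)
        · exact absurd (h ▸ (by simp : (Sum.inr u : α ⊕ β) ∈ s(Sum.inl x, Sum.inr u)))
            (notmem_inr_mapl u e0)
        · exact absurd (h ▸ (by simp : (Sum.inr v : α ⊕ β) ∈ s(Sum.inl y, Sum.inr v)))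
            (notmem_inr_mapl v e0)
        · exact absurd heq.symm (mapl_ne_mapr e0 e1)
        · rwa [← Sym2.map.injective Sum.inl_injective heq]
      · intro h
        exact Or.inr ⟨e0, h, rfl⟩
    have hclaimR : ∀ (s : Set (Sym2 α)) (p : H.Walk u v),
        {e0 : Sym2 β | Sym2.map Sum.inr e0 ∈ Fm s p} = {e | e ∈ p.edges} := by
      intro s p
      ext e0
      simp only [hFm, Set.mem_setOf_eq, Set.mem_union, Set.mem_insert_iff,
        Set.mem_singleton_iff, Set.mem_image]
      constructor
      · rintro (((h | h) | ⟨e1, he1, heq⟩) | ⟨e1, -, heq⟩)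
        · exact absurd (h ▸ (by simp : (Sum.inl x : α ⊕ β) ∈ s(Sum.inl x, Sum.inr u)))
            (notmem_inl_mapr x e0)
        · exact absurd (h ▸ (by simp : (Sum.inl y : α ⊕ β) ∈ s(Sum.inl y, Sum.inr v)))
            (notmem_inl_mapr y e0)
        · rwa [← Sym2.map.injective Sum.inr_injective heq]
        · exact absurd heq (mapl_ne_mapr e1 e0)
      · intro h
        exact Or.inl (Or.inr ⟨e0, h, rfl⟩)
    have hmemS_e : ∀ s ∈ S, s(x, y) ∈ s := by
      intro s hs
      rw [hS, Set.mem_setOf_eq] at hs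
      obtain ⟨a, c, hcyc, hec, rfl⟩ := hs
      exact hec
    have hmapsto : ∀ s ∈ S, ∀ p : H.Walk u v, p.IsHamiltonian → Fm s p ∈ T := by
      intro s hs p hp
      rw [hS, Set.mem_setOf_eq] at hs
      obtain ⟨a, c, hcyc, hec, rfl⟩ := hs
      rw [hT, Set.mem_setOf_eq]
      obtain ⟨q, hqham, hqne, hqset⟩ := extractG hxy hcyc hec
      obtain ⟨c'', hcyc'', hset''⟩ := splice_hamCycle hlr hrr hll huv hp hqham
      refine ⟨Sum.inl x, c'', hcyc'', ?_⟩
      rw [hset'']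
      have hdiff : {e | e ∈ c.edges} \ {s(x, y)} = {e | e ∈ q.edges} := by
        rw [hqset]
        exact Set.insert_diff_self_of_notMem hqne
      simp only [hFm]
      rw [hdiff]
    have hinj : ∀ s ∈ S, ∀ s' ∈ S, ∀ (p p' : H.Walk u v), p.IsHamiltonian →
        p'.IsHamiltonian → Fm s p = Fm s' p' → s = s' ∧ p = p' := by
      intro s hs s' hs' p p' hp hp' heq
      have h1 : s \ {s(x, y)} = s' \ {s(x, y)} := by
        rw [← hclaimL s p, ← hclaimL s' p', heq]
      have h2 : {e | e ∈ p.edges} = {e | e ∈ p'.edges} := by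
        rw [← hclaimR s p, ← hclaimR s' p', heq]
      constructor
      · have hes := hmemS_e s hs
        have hes' := hmemS_e s' hs'
        have := congrArg (insert (s(x, y))) h1
        rwa [Set.insert_diff_singleton, Set.insert_diff_singleton,
          Set.insert_eq_self.2 hes, Set.insert_eq_self.2 hes'] at this
      · exact path_eq_of_edges_eq p p' hp.isPath hp'.isPath
          (fun e => Set.ext_iff.1 h2 e)
    have hsurj : ∀ t ∈ T, ∃ s, ∃ hs : s ∈ S, ∃ p : H.Walk u v, ∃ hp : p.IsHamiltonian,
        Fm s p = t := by
      intro t ht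
      rw [hT, Set.mem_setOf_eq] at ht
      obtain ⟨a0, c', hc', rfl⟩ := ht
      obtain ⟨p, q, hpham, hqham, hset⟩ := decompose hlr hrr hll huv hc'
      obtain ⟨c, hcyc, hec, hcset⟩ := buildG hxy hqham
      have hqne : s(x, y) ∉ {e | e ∈ q.edges} := by
        intro hmem
        have := q.edges_subset_edgeSet hmem
        rw [SimpleGraph.edgeSet_deleteEdges] at this
        exact this.2 rfl
      refine ⟨{e | e ∈ c.edges}, by rw [hS, Set.mem_setOf_eq]; exact ⟨x, c, hcyc, hec, rfl⟩,
        p, hpham, ?_⟩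
      simp only [hFm]
      rw [hcset, Set.insert_diff_self_of_notMem hqne]
      exact hset.symm
    -- assemble the bijection
    let g : ↥S × {p : H.Walk u v // p.IsHamiltonian} → ↥T := fun z =>
      ⟨Fm z.1.1 z.2.1, hmapsto z.1.1 z.1.2 z.2.1 z.2.2⟩
    have hgbij : Function.Bijective g := by
      constructor
      · rintro ⟨⟨s, hs⟩, ⟨p, hp⟩⟩ ⟨⟨s', hs'⟩, ⟨p', hp'⟩⟩ hgz
        have := hinj s hs s' hs' p p' hp hp' (congrArg Subtype.val hgz)
        simp only [Prod.mk.injEq, Subtype.mk.injEq]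
        exact ⟨this.1, this.2⟩
      · rintro ⟨t, ht⟩
        obtain ⟨s, hs, p, hp, hFst⟩ := hsurj t ht
        exact ⟨⟨⟨s, hs⟩, ⟨p, hp⟩⟩, Subtype.ext hFst⟩
    have hcard : Nat.card (↥S × {p : H.Walk u v // p.IsHamiltonian}) = Nat.card ↥T :=
      Nat.card_eq_of_bijective g hgbij
    rw [Nat.card_prod, Nat.card_coe_set_eq, Nat.card_coe_set_eq] at hcard
    rw [← hcard, hc2, hc1]

end Final
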